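/- For every positive natural number n and complex number a, ∑_{k=0}^{n} (-n)_k (a)_k 2^k / ((-2n)_k k!) = (a/2 + 1/2)_n / (1/2)_n. -/

import Mathlib

open Finset

/-- The Pochhammer symbol (rising factorial) `(x)_k = x (x+1) ⋯ (x+k-1)`. -/
noncomputable def poch (x : ℂ) (k : ℕ) : ℂ := (ascPochhammer ℂ k).eval x

lemma poch_zero (x : ℂ) : poch x 0 = 1 := by simp [poch]

lemma poch_succ (x : ℂ) (k : ℕ) : poch x (k + 1) = poch x k * (x + k) :=
  ascPochhammer_succ_eval k x

/-- the summand, cleared of denominators -/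
noncomputable def fA (a : ℂ) (n k : ℕ) : ℂ :=
  (n.choose k : ℂ) * poch a k * 2 ^ k * ((2 * n - k).factorial : ℂ)

lemma fA_top (a : ℂ) (n : ℕ) : fA a n (n + 1) = 0 := by
  simp [fA, Nat.choose_succ_self]

lemma cert (a : ℂ) (n j : ℕ) (hn : 1 ≤ n) (hj : j ≤ n) :
    fA a (n + 1) (j + 1)
      = 2 * ((n : ℂ) + 1) *
        ((2 * (n : ℂ) + 1 - ((j : ℂ) + 1)) * fA a n (j + 1) + (a + j) * fA a n j) := by
  have hj1 : ((j : ℂ) + 1) ≠ 0 := by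
    have : ((j + 1 : ℕ) : ℂ) ≠ 0 := Nat.cast_ne_zero.2 (Nat.succ_ne_zero j)
    push_cast at this; exact this
  have h1 : ((n : ℂ) + 1) * (n.choose j : ℂ) = ((n + 1).choose (j + 1) : ℂ) * ((j : ℂ) + 1) := by
    exact_mod_cast congrArg (Nat.cast : ℕ → ℂ) (Nat.add_one_mul_choose_eq n j)
  have h2 : (n.choose (j + 1) : ℂ) * ((j : ℂ) + 1) = (n.choose j : ℂ) * ((n : ℂ) - j) := by
    have := congrArg (Nat.cast : ℕ → ℂ) (Nat.choose_succ_right_eq n j)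
    push_cast [Nat.cast_sub hj] at this
    exact this
  have hC1 : (((n + 1).choose (j + 1) : ℕ) : ℂ)
      = ((n : ℂ) + 1) * (n.choose j : ℂ) / ((j : ℂ) + 1) := by
    rw [eq_div_iff hj1]; linear_combination -h1
  have hC2 : ((n.choose (j + 1) : ℕ) : ℂ)
      = (n.choose j : ℂ) * ((n : ℂ) - j) / ((j : ℂ) + 1) := by
    rw [eq_div_iff hj1]; linear_combination h2
  -- factorial rewrites
  obtain ⟨m, hm⟩ : ∃ m, 2 * n - j = m + 1 := ⟨2 * n - j - 1, by omega⟩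
  have hmc : ((m : ℕ) : ℂ) = 2 * (n : ℂ) - j - 1 := by
    have h' := congrArg (Nat.cast : ℕ → ℂ) hm
    push_cast [Nat.cast_sub (show j ≤ 2 * n by omega)] at h'
    linear_combination -h'
  have e1 : 2 * (n + 1) - (j + 1) = m + 2 := by omega
  have e2 : 2 * n - (j + 1) = m := by omega
  have c1 : ((m + 2).factorial : ℂ)
      = (2 * (n : ℂ) - j + 1) * (2 * (n : ℂ) - j) * (m.factorial : ℂ) := by
    rw [Nat.factorial_succ, Nat.factorial_succ]
    push_cast
    rw [hmc]
    ring
  have c3 : (((m : ℕ) + 1).factorial : ℂ) = (2 * (n : ℂ) - j) * (m.factorial : ℂ) := by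
    rw [Nat.factorial_succ]
    push_cast
    rw [hmc]
    ring
  simp only [fA, e1, e2, hm, c1, c3, poch_succ, hC1, hC2]
  field_simp
  ring

lemma fA_zero_left (a : ℂ) (n : ℕ) :
    fA a (n + 1) 0 = 2 * ((n : ℂ) + 1) * ((2 * (n : ℂ) + 1) * fA a n 0) := by
  simp only [fA, Nat.choose_zero_right, Nat.sub_zero, pow_zero, poch_zero]
  have h : 2 * (n + 1) = (2 * n) + 1 + 1 := by ring
  rw [h, Nat.factorial_succ, Nat.factorial_succ]
  push_cast
  ring

lemma sum_rec (a : ℂ) (n : ℕ) (hn : 1 ≤ n) :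
    ∑ k ∈ range (n + 2), fA a (n + 1) k
      = 2 * ((n : ℂ) + 1) * (a + 2 * n + 1) * ∑ k ∈ range (n + 1), fA a n k := by
  rw [Finset.sum_range_succ']
  have hcongr : ∑ i ∈ range (n + 1), fA a (n + 1) (i + 1)
      = ∑ i ∈ range (n + 1), 2 * ((n : ℂ) + 1) *
          ((2 * (n : ℂ) + 1 - ((i : ℂ) + 1)) * fA a n (i + 1) + (a + i) * fA a n i) := by
    refine Finset.sum_congr rfl fun i hi => ?_
    exact cert a n i hn (by simpa using Nat.lt_succ_iff.mp (Finset.mem_range.mp hi))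
  have expand : ∑ i ∈ range (n + 1), 2 * ((n : ℂ) + 1) *
          ((2 * (n : ℂ) + 1 - ((i : ℂ) + 1)) * fA a n (i + 1) + (a + i) * fA a n i)
      = 2 * ((n : ℂ) + 1) *
          ((∑ i ∈ range (n + 1), (2 * (n : ℂ) + 1 - ((i : ℂ) + 1)) * fA a n (i + 1))
            + ∑ i ∈ range (n + 1), (a + (i : ℂ)) * fA a n i) := by
    rw [← Finset.sum_add_distrib, Finset.mul_sum]
  have hshift : ∑ i ∈ range (n + 1), (2 * (n : ℂ) + 1 - ((i : ℂ) + 1)) * fA a n (i + 1)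
      = (∑ k ∈ range (n + 1), (2 * (n : ℂ) + 1 - k) * fA a n k)
        - (2 * (n : ℂ) + 1) * fA a n 0 := by
    have h2 : ∑ k ∈ range (n + 2), (2 * (n : ℂ) + 1 - k) * fA a n k
        = (∑ i ∈ range (n + 1), (2 * (n : ℂ) + 1 - ((i : ℂ) + 1)) * fA a n (i + 1))
          + (2 * (n : ℂ) + 1 - ((0 : ℕ) : ℂ)) * fA a n 0 := by
      rw [Finset.sum_range_succ']
      push_cast
      ring_nf
    have h3 : ∑ k ∈ range (n + 2), (2 * (n : ℂ) + 1 - k) * fA a n k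
        = ∑ k ∈ range (n + 1), (2 * (n : ℂ) + 1 - k) * fA a n k := by
      rw [Finset.sum_range_succ, fA_top, mul_zero, add_zero]
    rw [← h3, h2]
    push_cast
    ring
  have hcomb : (∑ k ∈ range (n + 1), (2 * (n : ℂ) + 1 - k) * fA a n k)
        + ∑ k ∈ range (n + 1), (a + (k : ℂ)) * fA a n k
      = (a + 2 * (n : ℂ) + 1) * ∑ k ∈ range (n + 1), fA a n k := by
    rw [← Finset.sum_add_distrib, Finset.mul_sum]
    exact Finset.sum_congr rfl fun k _ => by ring
  rw [hcongr, expand, hshift, fA_zero_left]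
  linear_combination (2 * ((n : ℂ) + 1)) * hcomb

lemma closed_form (a : ℂ) (n : ℕ) (hn : 1 ≤ n) :
    ∑ k ∈ range (n + 1), fA a n k
      = 2 ^ n * (n.factorial : ℂ) * ∏ j ∈ range n, (a + 2 * j + 1) := by
  induction n, hn using Nat.le_induction with
  | base =>
    simp [Finset.sum_range_succ, Finset.prod_range_succ, fA, poch_succ, poch_zero]
    ring
  | succ n hn ih =>
    rw [sum_rec a n hn, ih]
    rw [Finset.prod_range_succ, Nat.factorial_succ]
    push_cast
    ring

lemma poch_neg_mul (m : ℕ) : ∀ k : ℕ, k ≤ m →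
    poch (-(m : ℂ)) k * ((m - k).factorial : ℂ) = (-1) ^ k * (m.factorial : ℂ) := by
  intro k
  induction k with
  | zero => simp [poch_zero]
  | succ k ih =>
    intro hk
    have hk' : k ≤ m := Nat.le_of_succ_le hk
    have ihk := ih hk'
    have hsub : m - k = (m - (k + 1)) + 1 := by omega
    have hcast : ((m - (k + 1) : ℕ) : ℂ) + 1 = (m : ℂ) - k := by
      have h1 : ((m - (k + 1) : ℕ) : ℂ) = (m : ℂ) - (k + 1) := by
        push_cast [Nat.cast_sub hk]; ring
      rw [h1]; ring
    rw [hsub, Nat.factorial_succ] at ihk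
    push_cast at ihk
    rw [hcast] at ihk
    have hne : (m : ℂ) - k ≠ 0 := by
      have : ((m - k : ℕ) : ℂ) = (m : ℂ) - k := by push_cast [Nat.cast_sub hk']; ring
      rw [← this]
      exact_mod_cast Nat.sub_ne_zero_of_lt hk
    rw [poch_succ]
    apply mul_left_cancel₀ hne
    linear_combination (-(m : ℂ) + k) * ihk

lemma poch_neg_ne (m k : ℕ) (hk : k ≤ m) : poch (-(m : ℂ)) k ≠ 0 := by
  intro h
  have h1 := poch_neg_mul m k hk
  rw [h, zero_mul] at h1
  exact (mul_ne_zero (pow_ne_zero k (neg_ne_zero.2 (one_ne_zero : (1:ℂ) ≠ 0)))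
    (Nat.cast_ne_zero.2 m.factorial_ne_zero)) h1.symm

lemma term_eq (a : ℂ) (n k : ℕ) (hk : k ≤ n) :
    poch (-(n : ℂ)) k * poch a k * 2 ^ k / (poch (-(2 * n : ℂ)) k * (k.factorial : ℂ))
      = fA a n k / (((2 * n).factorial : ℂ)) := by
  have hcast : -((2 * n : ℕ) : ℂ) = -(2 * n : ℂ) := by push_cast; ring
  have h1 := poch_neg_mul n k hk
  have h2 := poch_neg_mul (2 * n) k (by omega)
  rw [hcast] at h2
  have hf1 : ((n - k).factorial : ℂ) ≠ 0 := Nat.cast_ne_zero.2 (Nat.factorial_ne_zero _)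
  have hf2 : (((2 * n - k).factorial : ℕ) : ℂ) ≠ 0 := Nat.cast_ne_zero.2 (Nat.factorial_ne_zero _)
  have hfk : ((k.factorial : ℕ) : ℂ) ≠ 0 := Nat.cast_ne_zero.2 (Nat.factorial_ne_zero _)
  have hfn : ((n.factorial : ℕ) : ℂ) ≠ 0 := Nat.cast_ne_zero.2 (Nat.factorial_ne_zero _)
  have hf2n : (((2 * n).factorial : ℕ) : ℂ) ≠ 0 := Nat.cast_ne_zero.2 (Nat.factorial_ne_zero _)
  have hm1 : ((-1 : ℂ)) ^ k ≠ 0 := pow_ne_zero _ (by norm_num)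
  have hp1 : poch (-(n : ℂ)) k = (-1) ^ k * (n.factorial : ℂ) / ((n - k).factorial : ℂ) := by
    rw [eq_div_iff hf1]; exact h1
  have hp2 : poch (-(2 * n : ℂ)) k
      = (-1) ^ k * ((2 * n).factorial : ℂ) / (((2 * n - k).factorial : ℕ) : ℂ) := by
    rw [eq_div_iff hf2]; exact h2
  have hch : ((n.choose k : ℕ) : ℂ) * ((k.factorial : ℕ) : ℂ) * ((n - k).factorial : ℂ)
      = ((n.factorial : ℕ) : ℂ) := by
    exact_mod_cast congrArg (Nat.cast : ℕ → ℂ) (Nat.choose_mul_factorial_mul_factorial hk)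
  rw [fA, hp1, hp2]
  field_simp
  linear_combination (-(poch a k)) * hch

lemma poch_half (n : ℕ) :
    poch (1 / 2 : ℂ) n * ((2 : ℂ) ^ n * 2 ^ n * (n.factorial : ℂ)) = (((2 * n).factorial : ℕ) : ℂ) := by
  induction n with
  | zero => simp [poch_zero]
  | succ n ih =>
    have h : 2 * (n + 1) = (2 * n) + 1 + 1 := by ring
    rw [h, Nat.factorial_succ, Nat.factorial_succ, poch_succ, Nat.factorial_succ]
    push_cast
    linear_combination ((1 / 2 : ℂ) + n) * 4 * ((n : ℂ) + 1) * ih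

lemma poch_half_ne (n : ℕ) : poch (1 / 2 : ℂ) n ≠ 0 := by
  intro h
  have := poch_half n
  rw [h, zero_mul] at this
  exact (Nat.cast_ne_zero.2 (Nat.factorial_ne_zero _)) this.symm

lemma prod_odd (a : ℂ) (n : ℕ) :
    ∏ j ∈ range n, (a + 2 * j + 1) = 2 ^ n * poch (a / 2 + 1 / 2) n := by
  induction n with
  | zero => simp [poch_zero]
  | succ n ih =>
    rw [Finset.prod_range_succ, ih, poch_succ]
    ring

theorem twoF1_negn_a_neg2n (n : ℕ) (hn : 0 < n) (a : ℂ) :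
    ∑ k ∈ range (n + 1),
        poch (-(n : ℂ)) k * poch a k * 2 ^ k / (poch (-(2 * n : ℂ)) k * (k.factorial : ℂ))
      = poch (a / 2 + 1 / 2) n / poch (1 / 2) n := by
  have hsum : ∑ k ∈ range (n + 1),
        poch (-(n : ℂ)) k * poch a k * 2 ^ k / (poch (-(2 * n : ℂ)) k * (k.factorial : ℂ))
      = ∑ k ∈ range (n + 1), fA a n k / (((2 * n).factorial : ℕ) : ℂ) := by
    refine Finset.sum_congr rfl fun k hk => ?_
    exact term_eq a n k (Nat.lt_succ_iff.mp (Finset.mem_range.mp hk))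
  rw [hsum, ← Finset.sum_div, closed_form a n hn, prod_odd]
  rw [div_eq_div_iff (Nat.cast_ne_zero.2 (Nat.factorial_ne_zero _)) (poch_half_ne n)]
  linear_combination (poch (a / 2 + 1 / 2) n) * poch_half n
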